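/- Let F be a field with char(F) ≠ 2 and √2 ∈ F, let b₁, b₂ be the standard basis of F², and let W₃ = b₂ ⊗ b₁ ⊗ b₁ + b₁ ⊗ b₂ ⊗ b₁ + b₁ ⊗ b₁ ⊗ b₂ ∈ (F²)^⊗3. Then the tensor rank of the 6-tensor W₃ ⊗ W₃ ∈ (F²)^⊗6 is at most 8, which is strictly less than rank(W₃)² = 9. -/

import Mathlib

open scoped BigOperators

universe u v

noncomputable section

variable {F : Type v}

/-- Tensor rank: the least `r` such that `T` is a sum of `r` simple tensors. -/
def tRank {ι : Type*} [Fintype ι] [DecidableEq ι] {γ : ι → Type*} [∀ i, Fintype (γ i)]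
    [Field F] (T : (∀ i, γ i) → F) : ℕ :=
  sInf {r | ∃ v : Fin r → ∀ i, γ i → F, ∀ x, T x = ∑ j, ∏ i, v j i (x i)}

/-- Tensor product of a `ι`-indexed tensor and a `κ`-indexed tensor (no grouping). -/
def tProd [Field F] {ι κ : Type*} {γ : ι → Type u} {δ : κ → Type u}
    (S : (∀ i, γ i) → F) (T : (∀ j, δ j) → F) : (∀ i : ι ⊕ κ, Sum.elim γ δ i) → F :=
  fun x => S (fun i => x (Sum.inl i)) * T (fun j => x (Sum.inr j))

instance sumElimFintype {ι κ : Type*} {γ : ι → Type u} {δ : κ → Type u}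
    [hγ : ∀ i, Fintype (γ i)] [hδ : ∀ j, Fintype (δ j)] :
    ∀ i : ι ⊕ κ, Fintype (Sum.elim γ δ i)
  | Sum.inl i => hγ i
  | Sum.inr j => hδ j

/-- Tensor Kronecker product of two tensors with the same index set. -/
def tKron [Field F] {ι : Type*} {γ δ : ι → Type*}
    (S : (∀ i, γ i) → F) (T : (∀ i, δ i) → F) : (∀ i, γ i × δ i) → F :=
  fun x => S (fun i => (x i).1) * T (fun i => (x i).2)

/-- `n`-fold tensor product power of a tensor (no grouping), a tensor indexed by `Fin n × ι`. -/
def tPow [Field F] {ι : Type*} {γ : ι → Type*} (T : (∀ i, γ i) → F) (n : ℕ) :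
    (∀ p : Fin n × ι, γ p.2) → F :=
  fun x => ∏ j : Fin n, T (fun i => x (j, i))

/-- Restriction `t ≥ s`: `s` is obtained from `t` by applying linear maps on each factor. -/
def Restricts [Field F] {ι : Type*} [Fintype ι] [DecidableEq ι]
    {γ : ι → Type*} {δ : ι → Type*} [∀ i, Fintype (γ i)]
    (t : (∀ i, γ i) → F) (s : (∀ i, δ i) → F) : Prop :=
  ∃ A : ∀ i, δ i → γ i → F, ∀ x, (∑ y : ∀ i, γ i, (∏ i, A i (x i) (y i)) * t y) = s x

/-- Degeneration `t ⊵_d^e s` with approximation degree `d` and error degree `e`. -/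
def Degen [Field F] {ι : Type*} [Fintype ι] [DecidableEq ι]
    {γ : ι → Type*} {δ : ι → Type*} [∀ i, Fintype (γ i)]
    (t : (∀ i, γ i) → F) (s : (∀ i, δ i) → F) (d e : ℕ) : Prop :=
  ∃ A : ∀ i, δ i → γ i → Polynomial F, ∃ s' : Fin e → ((∀ i, δ i) → F),
    ∀ x, (∑ y : ∀ i, γ i, (∏ i, A i (x i) (y i)) * Polynomial.C (t y)) =
      Polynomial.C (s x) * Polynomial.X ^ d +
      ∑ j : Fin e, Polynomial.C (s' j x) * Polynomial.X ^ (d + 1 + (j : ℕ))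

/-- The rank-`r` order-`k` unit tensor `⟨r⟩_k = ∑_j b_j^{⊗k}`. -/
def unitTensor (F : Type v) [Field F] (r k : ℕ) : (Fin k → Fin r) → F :=
  fun x => ∑ j : Fin r, ∏ i : Fin k, if x i = j then 1 else 0

/-- The tensor `W_k = ∑_{type(i)=(k-1,1)} b_{i₁} ⊗ ⋯ ⊗ b_{i_k}` in `(F²)^{⊗k}`. -/
def Wtensor (F : Type v) [Field F] (k : ℕ) : (Fin k → Fin 2) → F :=
  fun x => if (∑ i, (x i : ℕ)) = 1 then 1 else 0

/-- `R^e(s)`: border rank with error degree at most `e`. -/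
def errRank [Field F] {k : ℕ} {γ : Fin k → Type*} [∀ i, Fintype (γ i)]
    (e : ℕ) (s : (∀ i, γ i) → F) : ℕ :=
  sInf {r | ∃ d, Degen (unitTensor F r k) s d e}

/-- `R_d(s)`: border rank with approximation degree `d`. -/
def degRank [Field F] {k : ℕ} {γ : Fin k → Type*} [∀ i, Fintype (γ i)]
    (d : ℕ) (s : (∀ i, γ i) → F) : ℕ :=
  sInf {r | ∃ e, Degen (unitTensor F r k) s d e}

/-- Border rank over ℂ: the least `r` such that `T` is a limit of tensors of rank `≤ r`. -/
def tBorderRank {ι : Type*} [Fintype ι] [DecidableEq ι] {γ : ι → Type*} [∀ i, Fintype (γ i)]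
    (T : (∀ i, γ i) → ℂ) : ℕ :=
  sInf {r | T ∈ closure {T' : (∀ i, γ i) → ℂ | tRank T' ≤ r}}

end

section CJZaux

private lemma fin2cases' : ∀ a : Fin 2, a = 0 ∨ a = 1 := by decide
private lemma fin30' : ((0:Fin 3) = 0) = True := by decide
private lemma fin31' : ((1:Fin 3) = 0) = False := by decide
private lemma fin32' : ((2:Fin 3) = 0) = False := by decide

/-- a simple 6-tensor: vector `c·L` (c folded into slot 0) on the three left slots, `R` on
the right slots. -/
private noncomputable def dv' {F : Type v} [Field F] (c : F) (L R : Fin 2 → F) :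
    ∀ i : Fin 3 ⊕ Fin 3, Sum.elim (fun _ : Fin 3 => Fin 2) (fun _ : Fin 3 => Fin 2) i → F :=
  fun i => match i with
  | .inl j => fun k => (if j = 0 then c else 1) * L k
  | .inr _ => R

set_option maxHeartbeats 1600000 in
private lemma upper8' {F : Type v} [Field F] (hchar : ringChar F ≠ 2) (r0 : F)
    (hsq : r0 ^ 2 = 2) : tRank (tProd (Wtensor F 3) (Wtensor F 3)) ≤ 8 := by
  have h2 : (2:F) ≠ 0 := by
    intro h
    have hd : ringChar F ∣ 2 :=
      (CharP.cast_eq_zero_iff F (ringChar F) 2).mp (by exact_mod_cast h)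
    rcases (Nat.dvd_prime Nat.prime_two).mp hd with h1 | h1
    · exact CharP.ringChar_ne_one h1
    · exact hchar h1
  obtain ⟨s, hs2⟩ : ∃ s : F, 2 * s ^ 2 = 1 := by
    refine ⟨(2:F)⁻¹ * r0, ?_⟩
    have h22 : (2:F) * 2⁻¹ = 1 := mul_inv_cancel₀ h2
    linear_combination (2*(2:F)⁻¹+1) * h22 + 2*(2:F)⁻¹^2 * hsq
  refine Nat.sInf_le ⟨![
    dv' (s^4) ![1,1] ![1,1],
    dv' (-s^4) ![1,1] ![1,-1],
    dv' (-s^4) ![1,-1] ![1,1],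
    dv' (s^4) ![1,-1] ![1,-1],
    dv' (-s) ![0,1] ![1,s],
    dv' s ![0,1] ![1,-s],
    dv' (-s) ![1,s] ![0,1],
    dv' s ![1,-s] ![0,1]], ?_⟩
  intro x
  simp only [tProd, Wtensor, dv', Fintype.prod_sum_type, Fin.sum_univ_succ,
    Fin.prod_univ_succ, Fin.sum_univ_zero, Fin.prod_univ_zero, Finset.sum_empty,
    Finset.prod_empty, Matrix.cons_val_zero, Matrix.cons_val_succ,
    Fin.succ_zero_eq_one, Fin.succ_one_eq_two, fin30', fin31', fin32',
    if_true, if_false, mul_one, one_mul, add_zero]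
  rcases fin2cases' (x (Sum.inl 0)) with h0|h0 <;>
  rcases fin2cases' (x (Sum.inl 1)) with h1|h1 <;>
  rcases fin2cases' (x (Sum.inl 2)) with h2|h2 <;>
  rcases fin2cases' (x (Sum.inr 0)) with h3|h3 <;>
  rcases fin2cases' (x (Sum.inr 1)) with h4|h4 <;>
  rcases fin2cases' (x (Sum.inr 2)) with h5|h5 <;>
  simp only [h0, h1, h2, h3, h4, h5,
    Matrix.cons_val_zero, Matrix.cons_val_one, Matrix.head_cons,
    Fin.val_zero, Fin.val_one, Nat.reduceAdd, Nat.reduceEqDiff, reduceIte] <;>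
  first
    | ring1
    | linear_combination (-1-2*s^2) * hs2
    | linear_combination (-2*s^2) * hs2

private lemma key' {F : Type*} [Field F] (a0 a1 A0 A1 b0 b1 B0 B1 c0 c1 C0 C1 : F)
    (h1 : a0*b0*c0 + A0*B0*C0 = 0) (h2 : a0*b0*c1 + A0*B0*C1 = 1)
    (h3 : a0*b1*c0 + A0*B1*C0 = 1) (h4 : a0*b1*c1 + A0*B1*C1 = 0)
    (h5 : a1*b0*c0 + A1*B0*C0 = 1) (h6 : a1*b0*c1 + A1*B0*C1 = 0)
    (h7 : a1*b1*c0 + A1*B1*C0 = 0) (h8 : a1*b1*c1 + A1*B1*C1 = 0) : False := by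
  have hD0 : a0*A0*((b0*B1 - b1*B0)*(c0*C1 - c1*C0)) = -1 := by
    linear_combination (a0*b1*c1 + A0*B1*C1)*h1 - (a0*b1*c0 + A0*B1*C0)*h2 - h3
  have hD1 : a1*A1*((b0*B1 - b1*B0)*(c0*C1 - c1*C0)) = 0 := by
    linear_combination (a1*b1*c1 + A1*B1*C1)*h5 - (a1*b1*c0 + A1*B1*C0)*h6 + h8
  have hD : (b0*B1 - b1*B0)*(c0*C1 - c1*C0) ≠ 0 := by
    intro h; rw [h, mul_zero] at hD0; norm_num at hD0
  rcases mul_eq_zero.mp hD1 with h | h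
  · rcases mul_eq_zero.mp h with h | h
    · subst h
      have hC1 : C1 = 0 := by linear_combination C0*h6 - C1*h5
      have hB1 : B1 = 0 := by linear_combination B0*h7 - B1*h5
      subst hC1; subst hB1
      have : (1:F) = 0 := by
        linear_combination (-(a0*b1*c0))*h2 - h3 + (a0*b0*c0)*h4
      exact one_ne_zero this
    · subst h
      have hc1 : c1 = 0 := by linear_combination c0*h6 - c1*h5
      have hb1 : b1 = 0 := by linear_combination b0*h7 - b1*h5
      subst hc1; subst hb1
      have : (1:F) = 0 := by
        linear_combination (-(A0*B1*C0))*h2 - h3 + (A0*B0*C0)*h4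
      exact one_ne_zero this
  · exact hD h

private lemma wrank3' {F : Type v} [Field F] : tRank (Wtensor F 3) = 3 := by
  have hmem : 3 ∈ {r | ∃ v : Fin r → Fin 3 → Fin 2 → F,
      ∀ x, Wtensor F 3 x = ∑ j, ∏ i, v j i (x i)} := by
    refine ⟨![![![0,1],![1,0],![1,0]], ![![1,0],![0,1],![1,0]], ![![1,0],![1,0],![0,1]]], ?_⟩
    intro x
    rcases fin2cases' (x 0) with h0|h0 <;> rcases fin2cases' (x 1) with h1|h1 <;>
      rcases fin2cases' (x 2) with h2|h2 <;>
      simp only [Wtensor, Fin.sum_univ_three, Fin.prod_univ_three, h0, h1, h2,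
        Matrix.cons_val_zero, Matrix.cons_val_one, Matrix.head_cons, Matrix.cons_val_two,
        Matrix.tail_cons, Fin.val_zero, Fin.val_one, Nat.reduceAdd, Nat.reduceEqDiff,
        reduceIte] <;>
      ring
  have hle : tRank (Wtensor F 3) ≤ 3 := Nat.sInf_le hmem
  have hge : 3 ≤ tRank (Wtensor F 3) := by
    refine le_csInf ⟨3, hmem⟩ ?_
    rintro m ⟨v, hv⟩
    by_contra hlt
    push_neg at hlt
    interval_cases m
    · have h := hv ![0,0,1]
      norm_num [Wtensor, Fin.sum_univ_three, Matrix.cons_val_two, Matrix.tail_cons,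
        Matrix.head_cons, Matrix.cons_val_zero, Matrix.cons_val_one] at h
    · have h2 := hv ![0,0,1]
      have h3 := hv ![0,1,0]
      have h4 := hv ![0,1,1]
      simp only [Wtensor, Fin.sum_univ_three, Fin.prod_univ_three, Fin.sum_univ_one,
        Matrix.cons_val_zero, Matrix.cons_val_one, Matrix.head_cons, Matrix.cons_val_two,
        Matrix.tail_cons, Fin.val_zero, Fin.val_one, Nat.reduceAdd, Nat.reduceEqDiff,
        reduceIte] at h2 h3 h4
      have : (1:F) = 0 := by
        linear_combination (-(v 0 0 0 * v 0 1 1 * v 0 2 0))*h2.symm - h3.symm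
          + (v 0 0 0 * v 0 1 0 * v 0 2 0)*h4.symm
      exact one_ne_zero this
    · have e1 := hv ![0,0,0]
      have e2 := hv ![0,0,1]
      have e3 := hv ![0,1,0]
      have e4 := hv ![0,1,1]
      have e5 := hv ![1,0,0]
      have e6 := hv ![1,0,1]
      have e7 := hv ![1,1,0]
      have e8 := hv ![1,1,1]
      simp only [Wtensor, Fin.sum_univ_three, Fin.prod_univ_three, Fin.sum_univ_two,
        Matrix.cons_val_zero, Matrix.cons_val_one, Matrix.head_cons, Matrix.cons_val_two,
        Matrix.tail_cons, Fin.val_zero, Fin.val_one, Nat.reduceAdd, Nat.reduceEqDiff,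
        reduceIte] at e1 e2 e3 e4 e5 e6 e7 e8
      exact key' (v 0 0 0) (v 0 0 1) (v 1 0 0) (v 1 0 1) (v 0 1 0) (v 0 1 1)
        (v 1 1 0) (v 1 1 1) (v 0 2 0) (v 0 2 1) (v 1 2 0) (v 1 2 1)
        e1.symm e2.symm e3.symm e4.symm e5.symm e6.symm e7.symm e8.symm
  omega

end CJZaux

/-- over a field of characteristic ≠ 2 containing √2,
`rank(W₃ ⊗ W₃) ≤ 8 < 9 = rank(W₃)²`. -/
theorem rank_W3_tProd_W3 {F : Type v} [Field F] (hchar : ringChar F ≠ 2)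
    (hsqrt : ∃ r : F, r ^ 2 = 2) :
    tRank (tProd (Wtensor F 3) (Wtensor F 3)) ≤ 8 ∧ (8 : ℕ) < 9 ∧
      tRank (Wtensor F 3) ^ 2 = 9 := by
  obtain ⟨r0, hsq⟩ := hsqrt
  refine ⟨upper8' hchar r0 hsq, by norm_num, ?_⟩
  rw [wrank3']; norm_num
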